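/- Let Ω be a semi-discrete primal domain and u a twice vertically-differentiable continuous function with Δ^δ u ≥ 0 on the interior of Ω. Then sup_{z ∈ Ω} u(z) = sup_{z ∈ ∂Ω} u(z), i.e. the maximum of u is attained on the boundary. -/

import Mathlib

open Filter Topology Set

/-- At a local max of a `C²` real function, the second derivative is nonpositive. -/
lemma second_deriv_nonpos_of_isLocalMax {f : ℝ → ℝ}
    (hf : ContDiffAt ℝ 2 f 0) (hmax : IsLocalMax f 0) :
    deriv (deriv f) 0 ≤ 0 := by
  by_contra hpos
  push_neg at hpos
  obtain ⟨s, hs_mem, hs⟩ := hf.contDiffOn le_rfl (by simp)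
  obtain ⟨t, hts, ht_open, ht0⟩ := mem_nhds_iff.mp hs_mem
  have hst : ContDiffOn ℝ 2 f t := hs.mono hts
  have hderiv : ContDiffOn ℝ 1 (deriv f) t := hst.deriv_of_isOpen ht_open (by norm_num)
  have hdiff2 : DifferentiableAt ℝ (deriv f) 0 :=
    ((hderiv.differentiableOn (by norm_num)) 0 ht0).differentiableAt (ht_open.mem_nhds ht0)
  have hd0 : deriv f 0 = 0 := hmax.deriv_eq_zero
  have hslope : Tendsto (slope (deriv f) 0) (𝓝[≠] 0) (𝓝 (deriv (deriv f) 0)) :=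
    hasDerivAt_iff_tendsto_slope.mp hdiff2.hasDerivAt
  have hev : ∀ᶠ y in 𝓝[≠] (0:ℝ), 0 < slope (deriv f) 0 y :=
    hslope.eventually (eventually_gt_nhds hpos)
  -- combine events
  have hev2 : ∀ᶠ y in 𝓝 (0:ℝ), y ∈ t ∧ f y ≤ f 0 :=
    (ht_open.eventually_mem ht0).and hmax
  obtain ⟨r, hr, hball'⟩ := Metric.mem_nhdsWithin_iff.mp (hev.and (hev2.filter_mono nhdsWithin_le_nhds))
  have hball : ∀ {y : ℝ}, y ∈ Metric.ball (0:ℝ) r → y ≠ 0 →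
      0 < slope (deriv f) 0 y ∧ y ∈ t ∧ f y ≤ f 0 :=
    fun hy hne => hball' ⟨hy, hne⟩
  set y₀ : ℝ := r / 2 with hy₀
  have hy₀pos : 0 < y₀ := by positivity
  have hmem : ∀ y ∈ Set.Icc (0:ℝ) y₀, y ∈ t := by
    intro y hy
    rcases eq_or_ne y 0 with rfl | hne
    · exact ht0
    · exact (hball (by
        simp only [Metric.mem_ball, Real.dist_eq, sub_zero]
        rw [abs_of_nonneg hy.1]; linarith [hy.2]) hne).2.1
  have hcont : ContinuousOn f (Set.Icc (0:ℝ) y₀) :=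
    (hst.continuousOn).mono hmem
  have hderivpos : ∀ y ∈ interior (Set.Icc (0:ℝ) y₀), 0 < deriv f y := by
    intro y hy
    rw [interior_Icc] at hy
    have hy' : y ∈ Metric.ball (0:ℝ) r := by
      simp only [Metric.mem_ball, Real.dist_eq, sub_zero]
      rw [abs_of_pos hy.1]; linarith [hy.2]
    have := (hball hy' (ne_of_gt hy.1)).1
    rw [slope_def_field, hd0, sub_zero, sub_zero, div_pos_iff] at this
    rcases this with ⟨h1, _⟩ | ⟨_, h2⟩
    · exact h1
    · linarith [hy.1]
  have hmono : StrictMonoOn f (Set.Icc (0:ℝ) y₀) :=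
    strictMonoOn_of_deriv_pos (convex_Icc _ _) hcont hderivpos
  have hlt : f 0 < f y₀ :=
    hmono (Set.left_mem_Icc.mpr hy₀pos.le) (Set.right_mem_Icc.mpr hy₀pos.le) hy₀pos
  have hle : f y₀ ≤ f 0 := by
    have hy₀ball : y₀ ∈ Metric.ball (0:ℝ) r := by
      simp only [Metric.mem_ball, Real.dist_eq, sub_zero]
      rw [abs_of_pos hy₀pos]; linarith
    exact (hball hy₀ball (ne_of_gt hy₀pos)).2.2
  linarith

/-- Derivative facts for the quadratic perturbation. -/
lemma quad_hasDerivAt (ε a y : ℝ) :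
    HasDerivAt (fun y : ℝ => ε * (a + y) ^ 2) (ε * (2 * (a + y))) y := by
  have h : HasDerivAt (fun y : ℝ => a + y) 1 y := (hasDerivAt_id y).const_add a
  have := (h.pow 2).const_mul ε
  simpa using this

lemma quad_deriv (ε a : ℝ) :
    deriv (fun y : ℝ => ε * (a + y) ^ 2) = fun y => ε * (2 * (a + y)) := by
  funext y; exact (quad_hasDerivAt ε a y).deriv

/-- Second derivative of a `C²` function plus the quadratic perturbation. -/
lemma second_deriv_add_quad {g : ℝ → ℝ} (hg : ContDiffAt ℝ 2 g 0) (ε a : ℝ) :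
    deriv (deriv (fun y : ℝ => g y + ε * (a + y) ^ 2)) 0
      = deriv (deriv g) 0 + 2 * ε := by
  obtain ⟨s, hs_mem, hs⟩ := hg.contDiffOn le_rfl (by simp)
  obtain ⟨t, hts, ht_open, ht0⟩ := mem_nhds_iff.mp hs_mem
  have hst : ContDiffOn ℝ 2 g t := hs.mono hts
  have hgdiff : ∀ y ∈ t, DifferentiableAt ℝ g y := fun y hy =>
    ((hst.differentiableOn (by norm_num)) y hy).differentiableAt (ht_open.mem_nhds hy)
  have hderivg : ContDiffOn ℝ 1 (deriv g) t := hst.deriv_of_isOpen ht_open (by norm_num)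
  have hgdiff2 : DifferentiableAt ℝ (deriv g) 0 :=
    ((hderivg.differentiableOn (by norm_num)) 0 ht0).differentiableAt (ht_open.mem_nhds ht0)
  have heq : ∀ y ∈ t, deriv (fun y : ℝ => g y + ε * (a + y) ^ 2) y
      = deriv g y + ε * (2 * (a + y)) := by
    intro y hy
    rw [deriv_fun_add (hgdiff y hy) (quad_hasDerivAt ε a y).differentiableAt,
      (quad_hasDerivAt ε a y).deriv]
  have heq' : deriv (fun y : ℝ => g y + ε * (a + y) ^ 2)
      =ᶠ[𝓝 0] fun y => deriv g y + ε * (2 * (a + y)) := by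
    filter_upwards [ht_open.eventually_mem ht0] with y hy using heq y hy
  rw [heq'.deriv_eq]
  have hq : HasDerivAt (fun y : ℝ => ε * (2 * (a + y))) (ε * 2) 0 := by
    have h : HasDerivAt (fun y : ℝ => 2 * (a + y)) 2 (0:ℝ) := by
      simpa using (((hasDerivAt_id (0:ℝ)).const_add a).const_mul 2)
    simpa using h.const_mul ε
  rw [deriv_fun_add hgdiff2 hq.differentiableAt, hq.deriv]
  ring

/- Maximum principle on a semi-discrete domain: let Ω ⊆ ℂ be a nonempty compact
semi-discrete domain with interior points I (both horizontal neighbors z ± δ in Ω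
and a vertical neighborhood in Ω), and u continuous on Ω, C² in the vertical
direction at interior points, with semi-discrete subharmonicity
Δ^δ u(z) = (u(z+δ) + u(z-δ) - 2u(z))/δ² + ∂_{yy}u(z) ≥ 0 on I.
Then sup_{z ∈ Ω} u(z) = sup_{z ∈ ∂Ω} u(z), where ∂Ω = Ω \ I: the maximum of u
is attained on the boundary. -/
theorem semi_discrete_maximum_principle (δ : ℝ) (hδ : 0 < δ)
    (Ω I : Set ℂ) (hΩ : IsCompact Ω) (hne : Ω.Nonempty) (hIΩ : I ⊆ Ω)
    (hnbr : ∀ z ∈ I, z + (δ : ℂ) ∈ Ω ∧ z - (δ : ℂ) ∈ Ω)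
    (hvert : ∀ z ∈ I, ∃ η > (0 : ℝ), ∀ y : ℝ, |y| ≤ η → z + (y : ℂ) * Complex.I ∈ Ω)
    (u : ℂ → ℝ) (hu : ContinuousOn u Ω)
    (hC2 : ∀ z ∈ I, ContDiffAt ℝ 2 (fun y : ℝ => u (z + (y : ℂ) * Complex.I)) 0)
    (hsub : ∀ z ∈ I,
      0 ≤ (u (z + (δ : ℂ)) + u (z - (δ : ℂ)) - 2 * u z) / δ ^ 2
          + iteratedDeriv 2 (fun y : ℝ => u (z + (y : ℂ) * Complex.I)) 0) :
    sSup (u '' Ω) = sSup (u '' (Ω \ I)) := by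
  -- Key step: for every ε > 0, the perturbed function attains its max on Ω \ I
  have key : ∀ ε : ℝ, 0 < ε → ∃ z₀ ∈ Ω \ I, ∀ z ∈ Ω,
      u z + ε * z.im ^ 2 ≤ u z₀ + ε * z₀.im ^ 2 := by
    intro ε hε
    have hvcont : ContinuousOn (fun z : ℂ => u z + ε * z.im ^ 2) Ω :=
      hu.add ((continuous_const.mul (Complex.continuous_im.pow 2)).continuousOn)
    obtain ⟨z₀, hz₀Ω, hmax⟩ := hΩ.exists_isMaxOn hne hvcont
    refine ⟨z₀, ⟨hz₀Ω, ?_⟩, fun z hz => hmax hz⟩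
    intro hz₀I
    obtain ⟨η, hη, hηΩ⟩ := hvert z₀ hz₀I
    have hg := hC2 z₀ hz₀I
    -- local max of the vertical slice of the perturbed function
    have hmaxf : IsLocalMax
        (fun y : ℝ => u (z₀ + (y : ℂ) * Complex.I) + ε * (z₀.im + y) ^ 2) 0 := by
      have hIcc : Set.Icc (-η) η ∈ 𝓝 (0:ℝ) := Icc_mem_nhds (by linarith) hη
      filter_upwards [hIcc] with y hy
      have hyΩ := hηΩ y (abs_le.mpr ⟨hy.1, hy.2⟩)
      have h1 := hmax hyΩ
      simp only [Complex.add_im, Complex.mul_im, Complex.ofReal_re, Complex.ofReal_im,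
        Complex.I_re, Complex.I_im, mul_one, mul_zero, add_zero, zero_mul] at h1 ⊢
      simpa using h1
    have hfC2 : ContDiffAt ℝ 2
        (fun y : ℝ => u (z₀ + (y : ℂ) * Complex.I) + ε * (z₀.im + y) ^ 2) 0 := by
      exact hg.add ((contDiff_const.mul ((contDiff_const.add contDiff_id).pow 2)).contDiffAt)
    have h2 := second_deriv_nonpos_of_isLocalMax hfC2 hmaxf
    rw [second_deriv_add_quad hg ε z₀.im] at h2
    -- discrete part is nonpositive at the max
    have hp : u (z₀ + (δ : ℂ)) ≤ u z₀ := by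
      have h := hmax (hnbr z₀ hz₀I).1
      simp only [Set.mem_setOf_eq, Complex.add_im, Complex.ofReal_im, add_zero] at h
      linarith
    have hm : u (z₀ - (δ : ℂ)) ≤ u z₀ := by
      have h := hmax (hnbr z₀ hz₀I).2
      simp only [Set.mem_setOf_eq, Complex.sub_im, Complex.ofReal_im, sub_zero] at h
      linarith
    have hdisc : (u (z₀ + (δ : ℂ)) + u (z₀ - (δ : ℂ)) - 2 * u z₀) / δ ^ 2 ≤ 0 :=
      div_nonpos_of_nonpos_of_nonneg (by linarith) (by positivity)
    have h3 := hsub z₀ hz₀I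
    have hiter : iteratedDeriv 2 (fun y : ℝ => u (z₀ + (y : ℂ) * Complex.I)) 0
        = deriv (deriv (fun y : ℝ => u (z₀ + (y : ℂ) * Complex.I))) 0 := by
      rw [show (2:ℕ) = 1 + 1 from rfl, iteratedDeriv_succ, iteratedDeriv_one]
    rw [hiter] at h3
    linarith
  -- boundary is nonempty
  obtain ⟨z₁, hz₁, _⟩ := key 1 one_pos
  have hbnd_ne : (Ω \ I).Nonempty := ⟨z₁, hz₁⟩
  have hbddΩ : BddAbove (u '' Ω) := (hΩ.image_of_continuousOn hu).bddAbove
  have hbddB : BddAbove (u '' (Ω \ I)) := hbddΩ.mono (Set.image_mono (f := u) Set.diff_subset)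
  refine le_antisymm ?_ (csSup_le_csSup hbddΩ (hbnd_ne.image u) (Set.image_mono (f := u) Set.diff_subset))
  -- bound for im²
  obtain ⟨w, hwΩ, hwmax⟩ := hΩ.exists_isMaxOn hne ((Complex.continuous_im.pow 2).continuousOn)
  set C : ℝ := w.im ^ 2 with hC
  have hC0 : 0 ≤ C := sq_nonneg _
  refine csSup_le (hne.image u) ?_
  rintro m ⟨z, hz, rfl⟩
  refine le_of_forall_pos_le_add ?_
  intro ε' hε'
  set ε : ℝ := ε' / (C + 1) with hεdef
  have hεpos : 0 < ε := by positivity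
  obtain ⟨z₀, hz₀, hkey⟩ := key ε hεpos
  have h1 : u z + ε * z.im ^ 2 ≤ u z₀ + ε * z₀.im ^ 2 := hkey z hz
  have h2 : u z₀ ≤ sSup (u '' (Ω \ I)) := le_csSup hbddB ⟨z₀, hz₀, rfl⟩
  have h3 : z₀.im ^ 2 ≤ C := hwmax hz₀.1
  have h4 : ε * C ≤ ε' := by
    rw [hεdef, div_mul_eq_mul_div, div_le_iff₀ (by positivity)]
    nlinarith
  nlinarith [sq_nonneg z.im]
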